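/- Let p be a prime and s ≥ 1. In Λ = ℤ_p[[X]] set ω_n = (1+X)^{p^n} − 1 and let ν_n ∈ Λ be the unique power series with X·ν_n = ω_n. For n ≥ 0 let R_n = Λ/(X^s, ν_n). Then each R_n is a finite ring of p-power order, and there exist a constant c ∈ ℕ and an N such that for all n ≥ N the exponent of the additive group of R_n equals p^{n+c}. -/

import Mathlib

set_option maxHeartbeats 1000000
set_option linter.unusedSectionVars false


/-- The Iwasawa algebra `Λ = ℤ_p[[X]]`. -/
abbrev Lam1 (p : ℕ) [Fact p.Prime] := PowerSeries ℤ_[p]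

/-- The finite ring `R_n = Λ/(X^s, ν_n)`. -/
abbrev Rn (p : ℕ) [Fact p.Prime] (s : ℕ) (ν : ℕ → Lam1 p) (n : ℕ) :=
  Lam1 p ⧸ Ideal.span {(PowerSeries.X : Lam1 p) ^ s, ν n}


open PowerSeries Finset
variable {p : ℕ} [Fact p.Prime]

lemma key_dvd (hp : p.Prime) (m j : ℕ) : p ^ m ∣ p ^ j * Nat.choose (p ^ m) (j + 1) := by
  rcases le_or_gt m j with h | h
  · exact dvd_mul_of_dvd_left (pow_dvd_pow p h) _
  · set a := (j + 1).factorization p with ha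
    set b := (j + 1) / p ^ a with hbdef
    have hb : p ^ a * b = j + 1 := Nat.ordProj_mul_ordCompl_eq_self (j+1) p
    have hpb : ¬ p ∣ b := Nat.not_dvd_ordCompl hp (Nat.succ_ne_zero j)
    have haj : a ≤ j := by
      have h1 : p ^ a ≤ j + 1 := Nat.le_of_dvd (Nat.succ_pos j) ⟨b, hb.symm⟩
      have h2 : a < p ^ a := Nat.lt_pow_self (n := a) hp.one_lt
      omega
    have key : (j + 1) * Nat.choose (p ^ m) (j + 1) = p ^ m * Nat.choose (p ^ m - 1) j := by
      have hpos : 1 ≤ p ^ m := Nat.one_le_pow _ _ hp.pos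
      have := Nat.add_one_mul_choose_eq (p ^ m - 1) j
      simp only [Nat.succ_eq_add_one, Nat.sub_add_cancel hpos] at this
      rw [mul_comm]; exact this.symm
    have hcancel : b * Nat.choose (p ^ m) (j + 1) = p ^ (m - a) * Nat.choose (p ^ m - 1) j := by
      have hpa : 0 < p ^ a := Nat.pow_pos hp.pos
      apply Nat.eq_of_mul_eq_mul_left hpa
      calc p ^ a * (b * Nat.choose (p ^ m) (j + 1)) = (j+1) * Nat.choose (p ^ m) (j+1) := by
            rw [← hb]; ring
        _ = p ^ m * Nat.choose (p ^ m - 1) j := key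
        _ = p ^ a * (p ^ (m - a) * Nat.choose (p ^ m - 1) j) := by
            rw [← mul_assoc, ← pow_add]; congr 2; omega
    have hdvd : p ^ (m - a) ∣ Nat.choose (p ^ m) (j + 1) := by
      have : p ^ (m - a) ∣ b * Nat.choose (p ^ m) (j + 1) := ⟨_, hcancel⟩
      exact (Nat.Coprime.pow_left _ ((Nat.Prime.coprime_iff_not_dvd hp).mpr hpb)).dvd_of_dvd_mul_left this
    calc p ^ m = p ^ a * p ^ (m - a) := by rw [← pow_add]; congr 1; omega
      _ ∣ p ^ j * Nat.choose (p ^ m) (j + 1) := mul_dvd_mul (pow_dvd_pow p haj) hdvd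

lemma coeff_pow' (N k : ℕ) : (PowerSeries.coeff k) ((1 + PowerSeries.X) ^ N) = (N.choose k : ℤ_[p]) := by
  induction N generalizing k with
  | zero =>
    cases k with
    | zero => simp
    | succ k => simp [PowerSeries.coeff_one, Nat.choose_zero_succ]
  | succ N ih =>
    rw [pow_succ, mul_add, mul_one, map_add, ih]
    cases k with
    | zero => simp [PowerSeries.coeff_zero_mul_X]
    | succ k => rw [PowerSeries.coeff_succ_mul_X, ih, Nat.choose_succ_succ]; push_cast; ring

lemma pPow_dvd_le {m e : ℕ} (h : (p:ℤ_[p])^m ∣ (p:ℤ_[p])^e) : m ≤ e :=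
  (pow_dvd_pow_iff (PadicInt.prime_p).ne_zero (PadicInt.prime_p).not_unit).mp h

lemma constCoeff_nu {n : ℕ} {g : Lam1 p} (hg : X * g = (1+X : Lam1 p)^(p^n) - 1) :
    constantCoeff g = (p:ℤ_[p])^n := by
  have h1 := coeff_succ_X_mul 0 g
  rw [hg] at h1
  rw [map_sub, coeff_pow'] at h1
  norm_num [coeff_one] at h1
  exact h1.symm

lemma nu_eq {n : ℕ} {g : Lam1 p} (hg : X * g = (1+X : Lam1 p)^(p^n) - 1) :
    ∃ r : Lam1 p, g = (p:Lam1 p)^n + X * r := by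
  refine ⟨mk fun k => coeff (k+1) g, ?_⟩
  have h := sub_const_eq_X_mul_shift g
  rw [constCoeff_nu hg] at h
  have hC : (C (R := ℤ_[p])) ((p:ℤ_[p])^n) = (p:Lam1 p)^n := by
    rw [map_pow, map_natCast]
  rw [hC] at h
  linear_combination h

lemma pPow_mem (s n : ℕ) {g : Lam1 p} (hg : X * g = (1+X : Lam1 p)^(p^n) - 1) :
    (p:Lam1 p)^(n*s) ∈ Ideal.span {(X:Lam1 p)^s, g} := by
  obtain ⟨r, hr⟩ := nu_eq hg
  rw [← Ideal.Quotient.eq_zero_iff_mem]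
  set I := Ideal.span {(X:Lam1 p)^s, g} with hI
  set π := Ideal.Quotient.mk I with hπ
  have hg0 : π g = 0 := Ideal.Quotient.eq_zero_iff_mem.mpr
    (Ideal.subset_span (by simp))
  have hX : π (X^s) = 0 := Ideal.Quotient.eq_zero_iff_mem.mpr
    (Ideal.subset_span (by simp))
  have hpn : π ((p:Lam1 p)^n) = - (π X * π r) := by
    have : (p:Lam1 p)^n = g - X * r := by linear_combination -hr
    rw [this, map_sub, map_mul, hg0]; ring
  have : π ((p:Lam1 p)^(n*s)) = ((-1)^s * π (X^s)) * (π r)^s := by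
    rw [pow_mul, map_pow, hpn, map_pow]; ring
  rw [this, hX]; ring

lemma nu_factor {n0 m : ℕ} {g0 gn : Lam1 p}
    (h0 : X * g0 = (1+X : Lam1 p)^(p^n0) - 1)
    (hn : X * gn = (1+X : Lam1 p)^(p^(n0+m)) - 1) :
    gn = g0 * ∑ j ∈ range (p^m), (((p^m).choose (j+1) : Lam1 p)) * (X * g0)^j := by
  apply mul_left_cancel₀ (X_ne_zero : (X:Lam1 p) ≠ 0)
  rw [hn]
  have h1 : ((1+X : Lam1 p))^(p^(n0+m)) = ((X * g0) + 1)^(p^m) := by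
    rw [pow_add, pow_mul, h0]; ring_nf
  rw [h1, add_pow, Finset.sum_range_succ']
  simp only [pow_zero, one_mul, Nat.choose_zero_right, Nat.cast_one, mul_one, Nat.sub_zero,
    one_pow]
  rw [add_sub_cancel_right, Finset.mul_sum, Finset.mul_sum]
  apply Finset.sum_congr rfl
  intro j _
  ring

lemma omega_decomp {s n0 : ℕ} (hs0 : s ≤ p^n0) {g0 : Lam1 p}
    (h0 : X * g0 = (1+X : Lam1 p)^(p^n0) - 1) :
    ∃ a b : Lam1 p, constantCoeff a = 0 ∧ X * g0 = (p:Lam1 p) * a + X^s * b := by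
  set a : Lam1 p := mk fun k => if k = 0 then 0 else (((p^n0).choose k / p : ℕ) : ℤ_[p]) with ha
  have hconst : constantCoeff a = 0 := by
    rw [← coeff_zero_eq_constantCoeff_apply, ha, coeff_mk]; simp
  have hdvd : (X:Lam1 p)^s ∣ X * g0 - (p:Lam1 p) * a := by
    rw [X_pow_dvd_iff]
    intro i hi
    have hpa : coeff i ((p:Lam1 p) * a) = (p:ℤ_[p]) * (coeff i a) := by
      rw [← map_natCast (C (R := ℤ_[p])) p, coeff_C_mul]
    rw [map_sub, h0, map_sub, coeff_pow', hpa, ha, coeff_mk]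
    cases i with
    | zero => simp [coeff_one]
    | succ k =>
      have hne : k + 1 ≠ p ^ n0 := by omega
      have hd : p ∣ (p^n0).choose (k+1) :=
        Nat.Prime.dvd_choose_pow Fact.out (Nat.succ_ne_zero k) hne
      have h2 : (p * ((p^n0).choose (k+1) / p) : ℕ) = (p^n0).choose (k+1) :=
        Nat.mul_div_cancel' hd
      have h3 : (p:ℤ_[p]) * (((p^n0).choose (k+1) / p : ℕ) : ℤ_[p])
          = ((p^n0).choose (k+1) : ℤ_[p]) := by exact_mod_cast congrArg (Nat.cast : ℕ → ℤ_[p]) h2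
      simp only [Nat.succ_ne_zero, if_false, coeff_one, h3]
      ring
  obtain ⟨b, hb⟩ := hdvd
  exact ⟨a, b, hconst, by linear_combination hb⟩

lemma q_decomp {s n0 : ℕ} (m : ℕ) (hs0 : s ≤ p^n0) {g0 : Lam1 p}
    (h0 : X * g0 = (1+X : Lam1 p)^(p^n0) - 1) :
    ∃ u w : Lam1 p, IsUnit u ∧
      (∑ j ∈ range (p^m), (((p^m).choose (j+1) : Lam1 p)) * (X * g0)^j)
        = (p:Lam1 p)^m * u + X^s * w := by
  obtain ⟨a, b, ha0, hab⟩ := omega_decomp hs0 h0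
  set c : ℕ → ℕ := fun j => p^j * (p^m).choose (j+1) / p^m with hc
  set u : Lam1 p := ∑ j ∈ range (p^m), ((c j : Lam1 p)) * a^j with hu
  have hcj : ∀ j, ((p^m : ℕ) : Lam1 p) * (c j : Lam1 p) = ((p:Lam1 p))^j * (((p^m).choose (j+1) : Lam1 p)) := by
    intro j
    rw [← Nat.cast_mul, Nat.mul_div_cancel' (key_dvd Fact.out m j)]
    push_cast; ring
  have hsum : (p:Lam1 p)^m * u = ∑ j ∈ range (p^m), (((p^m).choose (j+1) : Lam1 p)) * ((p:Lam1 p) * a)^j := by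
    rw [hu, Finset.mul_sum]
    apply Finset.sum_congr rfl
    intro j _
    have := hcj j
    push_cast at this
    rw [← mul_assoc, this, mul_pow]
    ring
  have hXs : (X:Lam1 p)^s ∣
      (∑ j ∈ range (p^m), (((p^m).choose (j+1) : Lam1 p)) * (X * g0)^j)
      - (∑ j ∈ range (p^m), (((p^m).choose (j+1) : Lam1 p)) * ((p:Lam1 p) * a)^j) := by
    rw [← Finset.sum_sub_distrib]
    apply Finset.dvd_sum
    intro j _
    rw [← mul_sub]
    apply Dvd.dvd.mul_left
    have h1 : (X * g0) - ((p:Lam1 p) * a) = X^s * b := by linear_combination hab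
    have h2 := sub_dvd_pow_sub_pow (X * g0) ((p:Lam1 p) * a) j
    rw [h1] at h2
    exact (Dvd.intro b rfl).trans h2
  obtain ⟨w, hw⟩ := hXs
  refine ⟨u, w, ?_, by rw [hsum]; linear_combination hw⟩
  rw [isUnit_iff_constantCoeff]
  have hcu : constantCoeff u = (c 0 : ℤ_[p]) := by
    rw [hu, map_sum]
    rw [Finset.sum_eq_single 0]
    · rw [pow_zero, mul_one, map_natCast]
    · intro j _ hj
      have : constantCoeff ((c j : Lam1 p) * a^j) =
          (c j : ℤ_[p]) * (constantCoeff a)^j := by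
        rw [map_mul, map_pow, map_natCast]
      rw [this, ha0, zero_pow hj, mul_zero]
    · intro h
      exfalso
      exact h (Finset.mem_range.mpr (Nat.pow_pos (n := m) (Fact.out : p.Prime).pos))
  have hc0 : c 0 = 1 := by
    rw [hc]
    simp [Nat.choose_one_right, Nat.div_self (Nat.pow_pos (n := m) (Fact.out : p.Prime).pos)]
  rw [hcu, hc0]
  simp

lemma C_pow_p (m : ℕ) : ((p:Lam1 p))^m = C ((p:ℤ_[p])^m) := by
  rw [map_pow, map_natCast]

lemma mem_backward {s n0 m : ℕ} (hs0 : s ≤ p^n0) {g0 gn : Lam1 p}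
    (h0 : X * g0 = (1+X : Lam1 p)^(p^n0) - 1)
    (hn : X * gn = (1+X : Lam1 p)^(p^(n0+m)) - 1)
    {e : ℕ} (he : (p:Lam1 p)^e ∈ Ideal.span {(X:Lam1 p)^s, g0}) :
    (p:Lam1 p)^(e+m) ∈ Ideal.span {(X:Lam1 p)^s, gn} := by
  obtain ⟨u, w, hu, hq⟩ := q_decomp (s := s) m hs0 h0
  have hgnq : gn = g0 * ((p:Lam1 p)^m * u + X^s * w) := by
    rw [nu_factor h0 hn, hq]
  obtain ⟨f, g, hfg⟩ := Ideal.mem_span_pair.mp he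
  set I := Ideal.span {(X:Lam1 p)^s, gn} with hI
  have hXI : (X:Lam1 p)^s ∈ I := Ideal.subset_span (by simp)
  have hgnI : gn ∈ I := Ideal.subset_span (by simp)
  have hmem : (p:Lam1 p)^(e+m) * u ∈ I := by
    have hid : (p:Lam1 p)^(e+m) * u
        = (f * ((p:Lam1 p)^m * u) - g * g0 * w) * X^s + g * gn := by
      rw [hgnq]
      linear_combination (-((p:Lam1 p)^m * u)) * hfg
    rw [hid]
    exact I.add_mem (I.mul_mem_left _ hXI) (I.mul_mem_left _ hgnI)
  obtain ⟨U, hU⟩ := hu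
  have h2 : (↑U⁻¹ : Lam1 p) * ((p:Lam1 p)^(e+m) * u) = (p:Lam1 p)^(e+m) := by
    rw [← hU, mul_comm ((p:Lam1 p)^(e+m)) _, ← mul_assoc, Units.inv_mul, one_mul]
  have := I.mul_mem_left (↑U⁻¹ : Lam1 p) hmem
  rwa [h2] at this

lemma mem_forward {s n0 m : ℕ} (hs : 1 ≤ s) (hs0 : s ≤ p^n0) {g0 gn : Lam1 p}
    (h0 : X * g0 = (1+X : Lam1 p)^(p^n0) - 1)
    (hn : X * gn = (1+X : Lam1 p)^(p^(n0+m)) - 1)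
    {e : ℕ} (he : (p:Lam1 p)^e ∈ Ideal.span {(X:Lam1 p)^s, gn}) :
    m + n0 ≤ e ∧ (p:Lam1 p)^(e-m) ∈ Ideal.span {(X:Lam1 p)^s, g0} := by
  obtain ⟨u, w, hu, hq⟩ := q_decomp (s := s) m hs0 h0
  have hgnq : gn = g0 * ((p:Lam1 p)^m * u + X^s * w) := by
    rw [nu_factor h0 hn, hq]
  obtain ⟨f, g, hfg⟩ := Ideal.mem_span_pair.mp he
  have hid : (p:Lam1 p)^e = (f + g * g0 * w) * X^s + (p:Lam1 p)^m * (g * g0 * u) := by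
    rw [← hfg, hgnq]; ring
  -- constant coefficients
  have hXs0 : constantCoeff ((X:Lam1 p)^s) = 0 := by
    rw [map_pow, constantCoeff_X, zero_pow (by omega : s ≠ 0)]
  have hg0c : constantCoeff g0 = (p:ℤ_[p])^n0 := constCoeff_nu h0
  have hule : m + n0 ≤ e := by
    have := congrArg (constantCoeff) hid
    simp only [map_add, map_mul, map_pow, map_natCast, hXs0, mul_zero, zero_mul, zero_add,
      hg0c] at this
    have hdv : ((p:ℤ_[p]))^(m+n0) ∣ (p:ℤ_[p])^e := by
      refine ⟨constantCoeff g * constantCoeff u, ?_⟩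
      rw [this]
      push_cast
      ring
    exact pPow_dvd_le hdv
  refine ⟨hule, ?_⟩
  have hXdvd : (X:Lam1 p)^s ∣ ((p:Lam1 p)^(e-m) - g * g0 * u) := by
    have hdvd1 : (X:Lam1 p)^s ∣ (p:Lam1 p)^m * ((p:Lam1 p)^(e-m) - g * g0 * u) := by
      refine ⟨f + g * g0 * w, ?_⟩
      have hpe : (p:Lam1 p)^m * (p:Lam1 p)^(e-m) = (p:Lam1 p)^e := by
        rw [← pow_add]; congr 1; omega
      rw [mul_sub, hpe, hid]; ring
    rw [X_pow_dvd_iff] at hdvd1 ⊢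
    intro i hi
    have := hdvd1 i hi
    rw [C_pow_p, coeff_C_mul] at this
    have hpne : ((p:ℤ_[p]))^m ≠ 0 :=
      pow_ne_zero _ (Nat.cast_ne_zero.mpr (Fact.out : p.Prime).pos.ne')
    exact (mul_eq_zero.mp this).resolve_left hpne
  obtain ⟨f', hf'⟩ := hXdvd
  rw [Ideal.mem_span_pair]
  exact ⟨f', g * u, by linear_combination -hf'⟩

lemma decomp_mod_Xs (s : ℕ) (y : Lam1 p) :
    ∃ g, y = (∑ i ∈ range s, C (coeff i y) * X^i) + X^s * g := by
  have hdvd : (X:Lam1 p)^s ∣ y - ∑ i ∈ range s, C (coeff i y) * X^i := by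
    rw [X_pow_dvd_iff]
    intro i0 hi0
    rw [map_sub, map_sum]
    have : ∀ i ∈ range s, coeff i0 (C (coeff i y) * X^i)
        = if i0 = i then coeff i y else 0 := by
      intro i _
      rw [coeff_C_mul, coeff_X_pow]
      split <;> simp
    rw [Finset.sum_congr rfl this, Finset.sum_ite_eq (range s) i0 (fun i => coeff i y),
      if_pos (Finset.mem_range.mpr hi0)]
    ring
  obtain ⟨g, hg⟩ := hdvd
  exact ⟨g, by linear_combination hg⟩

lemma smul_kill {s E : ℕ} {g : Lam1 p}
    (hE : (p:Lam1 p)^E ∈ Ideal.span {(X:Lam1 p)^s, g}) :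
    ∀ x : Lam1 p ⧸ Ideal.span {(X:Lam1 p)^s, g}, (p:ℕ)^E • x = 0 := by
  intro x
  rw [nsmul_eq_mul]
  have h0 : ((p^E : ℕ) : Lam1 p ⧸ Ideal.span {(X:Lam1 p)^s, g}) = 0 := by
    rw [← map_natCast (Ideal.Quotient.mk (Ideal.span {(X:Lam1 p)^s, g}))]
    rw [Ideal.Quotient.eq_zero_iff_mem]
    push_cast
    exact hE
  push_cast at h0 ⊢
  rw [h0, zero_mul]

lemma cast_pow_zero_iff {s t : ℕ} {g : Lam1 p} :
    ((p^t : ℕ) : Lam1 p ⧸ Ideal.span {(X:Lam1 p)^s, g}) = 0 ↔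
      (p:Lam1 p)^t ∈ Ideal.span {(X:Lam1 p)^s, g} := by
  rw [← map_natCast (Ideal.Quotient.mk (Ideal.span {(X:Lam1 p)^s, g})),
    Ideal.Quotient.eq_zero_iff_mem]
  constructor
  · intro h; rwa [Nat.cast_pow] at h
  · intro h; rwa [Nat.cast_pow]

lemma fin_and_card (s : ℕ) {g : Lam1 p} (E : ℕ)
    (hE : (p:Lam1 p)^E ∈ Ideal.span {(X:Lam1 p)^s, g}) :
    Finite (Lam1 p ⧸ Ideal.span {(X:Lam1 p)^s, g}) ∧
      ∃ k, Nat.card (Lam1 p ⧸ Ideal.span {(X:Lam1 p)^s, g}) = p^k := by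
  have hp : p.Prime := Fact.out
  haveI : NeZero (p^E) := ⟨pow_ne_zero E hp.pos.ne'⟩
  set I := Ideal.span {(X:Lam1 p)^s, g} with hI
  set π := Ideal.Quotient.mk I with hπ
  have hXI : (X:Lam1 p)^s ∈ I := Ideal.subset_span (by simp)
  have hfin : Finite (Lam1 p ⧸ I) := by
    set φ : (Fin s → ZMod (p^E)) → (Lam1 p ⧸ I) :=
      fun v => π (∑ i : Fin s, C (((v i).val : ℤ_[p])) * X^(i:ℕ)) with hφ
    apply Finite.of_surjective φ
    intro x
    obtain ⟨y, rfl⟩ := Ideal.Quotient.mk_surjective x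
    refine ⟨fun i => ((coeff i y).appr E : ZMod (p^E)), ?_⟩
    obtain ⟨gg, hgg⟩ := decomp_mod_Xs s y
    have h1 : π y = π (∑ i ∈ range s, C (coeff i y) * X^(i:ℕ)) := by
      conv_lhs => rw [hgg]
      rw [map_add]
      have : π (X^s * gg) = 0 := by
        rw [Ideal.Quotient.eq_zero_iff_mem]
        exact I.mul_mem_right _ hXI
      rw [this, add_zero]
    rw [hφ, h1, ← Fin.sum_univ_eq_sum_range (fun i => C (coeff i y) * X^i) s]
    rw [hπ, Ideal.Quotient.mk_eq_mk_iff_sub_mem, ← Finset.sum_sub_distrib]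
    apply Ideal.sum_mem
    intro i _
    set A := coeff (i:ℕ) y with hA
    set z := A.appr E with hz
    have hval : (((z : ZMod (p^E)).val : ℕ) : ℤ_[p]) = ((z % p^E : ℕ) : ℤ_[p]) := by
      rw [ZMod.val_natCast]
    have ha : (p:ℤ_[p])^E ∣ A - (z:ℤ_[p]) := by
      have := PadicInt.appr_spec E A
      rwa [Ideal.mem_span_singleton] at this
    have hb : (p:ℤ_[p])^E ∣ ((z % p^E : ℕ) : ℤ_[p]) - (z : ℤ_[p]) := by
      refine ⟨-(((z / p^E : ℕ)) : ℤ_[p]), ?_⟩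
      have hzz : (z:ℤ_[p]) = ((p^E * (z / p^E) + z % p^E : ℕ) : ℤ_[p]) := by
        rw [Nat.div_add_mod]
      rw [hzz]; push_cast; ring
    have hdiff : (p:ℤ_[p])^E ∣ (((z : ZMod (p^E)).val : ℕ) : ℤ_[p]) - A := by
      rw [hval]
      have heq : ((z % p^E : ℕ) : ℤ_[p]) - A
          = (((z % p^E : ℕ) : ℤ_[p]) - (z : ℤ_[p])) - (A - (z:ℤ_[p])) := by ring
      rw [heq]
      exact dvd_sub hb ha
    obtain ⟨t, ht⟩ := hdiff
    have hterm : C (((z : ZMod (p^E)).val : ℕ) : ℤ_[p]) * X^(i:ℕ)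
        - C A * X^(i:ℕ) = (p:Lam1 p)^E * (C t * X^(i:ℕ)) := by
      rw [← sub_mul, ← map_sub, ht, map_mul, C_pow_p]
      ring
    rw [hterm]
    exact I.mul_mem_right _ hE
  refine ⟨hfin, ?_⟩
  haveI := hfin
  have hPG : IsPGroup p (Multiplicative (Lam1 p ⧸ I)) := by
    intro x
    refine ⟨E, ?_⟩
    have hk := smul_kill hE (Multiplicative.toAdd x)
    apply Multiplicative.toAdd.injective
    rw [toAdd_pow, toAdd_one]
    exact hk
  obtain ⟨k, hk⟩ := (IsPGroup.iff_card).mp hPG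
  exact ⟨k, by rw [← hk]; exact (Nat.card_congr Multiplicative.toAdd).symm⟩


theorem exponent_Rn_eventually
    (p : ℕ) [Fact p.Prime] (s : ℕ) (hs : 1 ≤ s)
    (ν : ℕ → Lam1 p)
    (hν : ∀ n : ℕ, (PowerSeries.X : Lam1 p) * ν n =
      (1 + PowerSeries.X) ^ (p ^ n) - 1) :
    (∀ n : ℕ, Finite (Rn p s ν n) ∧ ∃ m : ℕ, Nat.card (Rn p s ν n) = p ^ m) ∧
      ∃ c N : ℕ, ∀ n ≥ N, AddMonoid.exponent (Rn p s ν n) = p ^ (n + c) := by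
  have hp : p.Prime := Fact.out
  constructor
  · intro n
    exact fin_and_card s (n*s) (pPow_mem s n (hν n))
  · classical
    have hs0 : s ≤ p^s := le_of_lt (Nat.lt_pow_self (n := s) hp.one_lt)
    have hex : ∃ e, (p:Lam1 p)^e ∈ Ideal.span {(X:Lam1 p)^s, ν s} :=
      ⟨s * s, pPow_mem s s (hν s)⟩
    set d := Nat.find hex with hd_def
    have hd : (p:Lam1 p)^d ∈ Ideal.span {(X:Lam1 p)^s, ν s} := Nat.find_spec hex
    have hdmin : ∀ e, (p:Lam1 p)^e ∈ Ideal.span {(X:Lam1 p)^s, ν s} → d ≤ e :=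
      fun e he => Nat.find_min' hex he
    have hds : s ≤ d := by
      have h00 : X * ν s = (1 + X : Lam1 p)^(p^(s+0)) - 1 := by
        simpa using hν s
      have := mem_forward hs hs0 (hν s) h00 hd
      omega
    refine ⟨d - s, s, ?_⟩
    intro n hn
    set m := n - s with hm
    have hmn : s + m = n := by omega
    have hνn : X * ν n = (1 + X : Lam1 p)^(p^(s+m)) - 1 := by
      rw [hmn]; exact hν n
    have hEmem : (p:Lam1 p)^(d+m) ∈ Ideal.span {(X:Lam1 p)^s, ν n} :=
      mem_backward hs0 (hν s) hνn hd
    have hmin : ∀ t, (p:Lam1 p)^t ∈ Ideal.span {(X:Lam1 p)^s, ν n} → d + m ≤ t := by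
      intro t ht
      obtain ⟨h1, h2⟩ := mem_forward hs hs0 (hν s) hνn ht
      have := hdmin _ h2
      omega
    have hkill := smul_kill hEmem
    have hdvd : AddMonoid.exponent (Rn p s ν n) ∣ p^(d+m) :=
      AddMonoid.exponent_dvd_iff_forall_nsmul_eq_zero.mpr (by
        intro x
        exact hkill x)
    obtain ⟨t, htle, hexp⟩ := (Nat.dvd_prime_pow hp).mp hdvd
    have hone : (p^t : ℕ) • (1 : Rn p s ν n) = 0 := by
      rw [← hexp]
      exact AddMonoid.exponent_nsmul_eq_zero 1
    have hcast : ((p^t : ℕ) : Rn p s ν n) = 0 := by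
      have h2 : ((p^t : ℕ) : Rn p s ν n) = (p^t : ℕ) • (1 : Rn p s ν n) := by
        rw [nsmul_eq_mul, mul_one]
      rw [h2, hone]
    have hmem_t : (p:Lam1 p)^t ∈ Ideal.span {(X:Lam1 p)^s, ν n} :=
      cast_pow_zero_iff.mp hcast
    have ht2 : d + m ≤ t := hmin t hmem_t
    have : t = d + m := by omega
    rw [hexp, this]
    congr 1
    omega
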